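/- arXiv:2008.06220 — 3 statements merged into one kernel-verified Lean document; each statement's English description precedes it below -/
import Mathlib

section
/- Let A be a Hermitian matrix partitioned into a 3×3 block form with blocks A_{ij}, 1 ≤ i,j ≤ 3, such that A_{22} and the 2×2 block matrix [[A_{11}, A_{12}],[A_{21}, A_{22}]] are invertible and A is positive semidefinite. Then the Schur complement with respect to the larger block is dominated by the Schur complement with respect to the smaller block: A_{33} - (A_{31}, A_{32}) [[A_{11}, A_{12}],[A_{21}, A_{22}]]^{-1} (A_{13}; A_{23}) ≼ A_{33} - A_{32} A_{22}^{-1} A_{23} in the Loewner order. -/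
open Matrix
open scoped ComplexOrder

lemma posDef_of_posSemidef_isUnit {n : Type*} [Fintype n] [DecidableEq n]
    {M : Matrix n n ℂ} (hM : M.PosSemidef) (hU : IsUnit M) : M.PosDef := by
  refine Matrix.PosDef.of_dotProduct_mulVec_pos hM.1 (fun x hx => ?_)
  rcases (hM.dotProduct_mulVec_nonneg x).lt_or_eq with h | h
  · exact h
  · exfalso
    apply hx
    have h0 : M *ᵥ x = 0 := (hM.dotProduct_mulVec_zero_iff x).mp h.symm
    have := congrArg (fun v => M⁻¹ *ᵥ v) h0
    simpa [Matrix.mulVec_mulVec,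
      Matrix.nonsing_inv_mul M ((Matrix.isUnit_iff_isUnit_det M).mp hU)] using this

theorem stmt0 {a b c : Type*} [Fintype a] [Fintype b] [Fintype c]
    [DecidableEq a] [DecidableEq b] [DecidableEq c]
    (A11 : Matrix a a ℂ) (A12 : Matrix a b ℂ) (A13 : Matrix a c ℂ)
    (A21 : Matrix b a ℂ) (A22 : Matrix b b ℂ) (A23 : Matrix b c ℂ)
    (A31 : Matrix c a ℂ) (A32 : Matrix c b ℂ) (A33 : Matrix c c ℂ)
    (hA : (Matrix.fromBlocks (Matrix.fromBlocks A11 A12 A21 A22)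
        (Matrix.fromRows A13 A23) (Matrix.fromCols A31 A32) A33).PosSemidef)
    (h22 : IsUnit A22)
    (hTop : IsUnit (Matrix.fromBlocks A11 A12 A21 A22)) :
    ((A33 - A32 * A22⁻¹ * A23) -
      (A33 - Matrix.fromCols A31 A32 * (Matrix.fromBlocks A11 A12 A21 A22)⁻¹ *
        Matrix.fromRows A13 A23)).PosSemidef := by
  set B : Matrix (a ⊕ b) (a ⊕ b) ℂ := Matrix.fromBlocks A11 A12 A21 A22 with hBdef
  set C : Matrix (a ⊕ b) c ℂ := Matrix.fromRows A13 A23 with hCdef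
  -- from hermitianness, the lower-left block is Cᴴ
  have hHerm := hA.1
  rw [Matrix.isHermitian_fromBlocks_iff] at hHerm
  obtain ⟨hBH, hCH, -, -⟩ := hHerm
  -- hCH : Cᴴ = fromColumns A31 A32
  have hA32 : A32 = A23ᴴ := by
    ext i j
    have := congrFun (congrFun hCH i) (Sum.inr j)
    simpa [hCdef, Matrix.conjTranspose_apply] using this.symm
  -- B is positive semidefinite as a principal submatrix
  have hBpsd : B.PosSemidef := by
    have h := hA.submatrix (Sum.inl : a ⊕ b → (a ⊕ b) ⊕ c)
    have heq : (Matrix.fromBlocks B C (Matrix.fromCols A31 A32) A33).submatrix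
        (Sum.inl : a ⊕ b → (a ⊕ b) ⊕ c) Sum.inl = B := by
      ext i j; simp
    rwa [heq] at h
  have hBpd : B.PosDef := posDef_of_posSemidef_isUnit hBpsd hTop
  have hA22psd : A22.PosSemidef := by
    have h := hBpsd.submatrix (Sum.inr : b → a ⊕ b)
    have heq : B.submatrix (Sum.inr : b → a ⊕ b) Sum.inr = A22 := by
      ext i j; simp [hBdef]
    rwa [heq] at h
  have hA22pd : A22.PosDef := posDef_of_posSemidef_isUnit hA22psd h22
  haveI : Invertible B := hTop.invertible
  haveI : Invertible A22 := h22.invertible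
  set X : Matrix c c ℂ := Cᴴ * B⁻¹ * C with hXdef
  -- the matrix [B C; Cᴴ X] is PSD since its Schur complement is 0
  have h1 : (Matrix.fromBlocks B C Cᴴ X).PosSemidef := by
    rw [Matrix.PosDef.fromBlocks₁₁ C X hBpd]
    simpa [hXdef, sub_self] using Matrix.PosSemidef.zero
  -- take the principal submatrix on (b ⊕ c)
  have h2 := h1.submatrix (Sum.map (Sum.inr : b → a ⊕ b) (id : c → c))
  have heq2 : (Matrix.fromBlocks B C Cᴴ X).submatrix
      (Sum.map (Sum.inr : b → a ⊕ b) (id : c → c)) (Sum.map Sum.inr id)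
      = Matrix.fromBlocks A22 A23 A23ᴴ X := by
    ext (i | i) (j | j) <;>
      simp [hBdef, hCdef, Matrix.conjTranspose_apply]
  rw [heq2] at h2
  have h4 : (X - A23ᴴ * A22⁻¹ * A23).PosSemidef :=
    (Matrix.PosDef.fromBlocks₁₁ A23 X hA22pd).mp h2
  have hgoal : (A33 - A32 * A22⁻¹ * A23) -
      (A33 - Matrix.fromCols A31 A32 * B⁻¹ * C) = X - A23ᴴ * A22⁻¹ * A23 := by
    rw [← hCH, hA32, hXdef]
    abel
  rw [hgoal]
  exact h4
end

section
/- Let λ ≥ 1 and let σ²_t, t = 0,…,T−1, be nonnegative reals each bounded above by B for a kernel K with K(x,x) ≤ B for all x, and satisfying ∏_{t=0}^{T-1}(1 + σ²_t/λ) = det(K_T/λ + I). Then Σ_{t=0}^{T-1} σ²_t ≤ max(1, B) · (1 + B/λ)/log(1 + B/λ) · log det(K_T/λ + I). In particular if σ²_t ≤ λ for all t, then Σ_t σ²_t ≤ 2λ log det(K_T/λ + I). -/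
lemma key_log_ineq (c s : ℝ) (hc : 0 < c) (hs : 0 ≤ s) (hsc : s ≤ c) :
    s * Real.log (1 + c) ≤ c * Real.log (1 + s) := by
  have hcon := strictConcaveOn_log_Ioi.concaveOn
  have h1 : (1:ℝ) ∈ Set.Ioi (0:ℝ) := by norm_num
  have h2 : (1+c) ∈ Set.Ioi (0:ℝ) := by simp; linarith
  have ha : 0 ≤ 1 - s/c := by
    have : s/c ≤ 1 := div_le_one_of_le₀ hsc hc.le
    linarith
  have hb : 0 ≤ s/c := div_nonneg hs hc.le
  have hab : (1 - s/c) + s/c = 1 := by ring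
  have h := hcon.2 h1 h2 ha hb hab
  simp only [smul_eq_mul, Real.log_one, mul_zero, mul_one, zero_add] at h
  have heq : (1 - s/c) + s/c * (1+c) = 1 + s := by field_simp; ring
  rw [heq] at h
  have h' : c * (s/c * Real.log (1+c)) ≤ c * Real.log (1+s) :=
    mul_le_mul_of_nonneg_left h hc.le
  calc s * Real.log (1+c) = c * (s/c * Real.log (1+c)) := by field_simp
  _ ≤ c * Real.log (1+s) := h'

theorem stmt5 {T : ℕ} (lam B : ℝ) (hlam : 1 ≤ lam) (hB : 0 < B)
    (σ2 : Fin T → ℝ) (hnn : ∀ t, 0 ≤ σ2 t) (hub : ∀ t, σ2 t ≤ B)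
    (KT : Matrix (Fin T) (Fin T) ℝ) (hKT : KT.PosSemidef)
    (hprod : ∏ t, (1 + σ2 t / lam) = ((lam⁻¹ • KT) + 1).det) :
    (∑ t, σ2 t ≤ max 1 B * ((1 + B / lam) / Real.log (1 + B / lam)) *
        Real.log (((lam⁻¹ • KT) + 1).det)) ∧
    ((∀ t, σ2 t ≤ lam) →
      ∑ t, σ2 t ≤ 2 * lam * Real.log (((lam⁻¹ • KT) + 1).det)) := by
  have hlam0 : 0 < lam := by linarith
  have hterm : ∀ t, 0 < 1 + σ2 t / lam := fun t => by
    have := div_nonneg (hnn t) hlam0.le; linarith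
  have hM : ∀ t, 0 ≤ Real.log (1 + σ2 t / lam) := fun t =>
    Real.log_nonneg (by have := div_nonneg (hnn t) hlam0.le; linarith)
  have hlog : Real.log (((lam⁻¹ • KT) + 1).det) = ∑ t, Real.log (1 + σ2 t / lam) := by
    rw [← hprod, Real.log_prod]
    intro t _; exact (hterm t).ne'
  have hBl : 0 < B / lam := div_pos hB hlam0
  have hlogB : 0 < Real.log (1 + B / lam) := Real.log_pos (by linarith)
  have hkey : ∀ t, σ2 t * Real.log (1 + B / lam) ≤ B * Real.log (1 + σ2 t / lam) := by
    intro t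
    have h := key_log_ineq (B/lam) (σ2 t / lam) hBl (div_nonneg (hnn t) hlam0.le)
      ((div_le_div_iff_of_pos_right hlam0).mpr (hub t))
    rw [div_mul_eq_mul_div, div_mul_eq_mul_div] at h
    exact (div_le_div_iff_of_pos_right hlam0).mp h
  constructor
  · have hCle : ∀ t, σ2 t ≤ max 1 B * ((1 + B / lam) / Real.log (1 + B / lam)) *
        Real.log (1 + σ2 t / lam) := by
      intro t
      have hBle : B ≤ max 1 B * (1 + B / lam) := by
        nlinarith [le_max_right 1 B, le_max_left 1 B]
      have h1 : σ2 t * Real.log (1 + B / lam) ≤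
          max 1 B * (1 + B / lam) * Real.log (1 + σ2 t / lam) := by
        calc σ2 t * Real.log (1 + B / lam) ≤ B * Real.log (1 + σ2 t / lam) := hkey t
        _ ≤ max 1 B * (1 + B / lam) * Real.log (1 + σ2 t / lam) :=
          mul_le_mul_of_nonneg_right hBle (hM t)
      rw [show max 1 B * ((1 + B / lam) / Real.log (1 + B / lam)) *
          Real.log (1 + σ2 t / lam)
          = (max 1 B * (1 + B / lam) * Real.log (1 + σ2 t / lam)) /
            Real.log (1 + B / lam) by ring]
      rw [le_div_iff₀ hlogB]
      exact h1
    calc ∑ t, σ2 t ≤ ∑ t, max 1 B * ((1 + B / lam) / Real.log (1 + B / lam)) *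
        Real.log (1 + σ2 t / lam) := Finset.sum_le_sum fun t _ => hCle t
    _ = max 1 B * ((1 + B / lam) / Real.log (1 + B / lam)) *
        Real.log (((lam⁻¹ • KT) + 1).det) := by rw [hlog, Finset.mul_sum]
  · intro hl
    have hCle : ∀ t, σ2 t ≤ 2 * lam * Real.log (1 + σ2 t / lam) := by
      intro t
      have h := key_log_ineq 1 (σ2 t / lam) one_pos (div_nonneg (hnn t) hlam0.le)
        ((div_le_one hlam0).mpr (hl t))
      rw [show (1:ℝ) + 1 = 2 by norm_num, one_mul, div_mul_eq_mul_div] at h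
      have h2 : σ2 t * Real.log 2 ≤ lam * Real.log (1 + σ2 t / lam) := by
        have := (div_le_iff₀ hlam0).mp h
        linarith
      nlinarith [Real.log_two_gt_d9, hnn t, hM t]
    calc ∑ t, σ2 t ≤ ∑ t, 2 * lam * Real.log (1 + σ2 t / lam) :=
      Finset.sum_le_sum fun t _ => hCle t
    _ = 2 * lam * Real.log (((lam⁻¹ • KT) + 1).det) := by rw [hlog, Finset.mul_sum]
end

section
/- Monotonicity of posterior variance under added data: with a PSD kernel K and λ > 0, for any two datasets D ⊆ D' (as multisets of points) and any point x, the ridge-regression variance σ²_{D'}(x) = K(x,x) − κ_{D'}(x)ᵀ(K_{D'} + λI)^{-1}κ_{D'}(x) is at most σ²_D(x). -/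
open Matrix

private lemma smul_one_posDef {m : ℕ} {lam : ℝ} (hlam : 0 < lam) :
    (lam • (1 : Matrix (Fin m) (Fin m) ℝ)).PosDef := by
  rw [smul_one_eq_diagonal]
  exact (Matrix.posDef_diagonal_iff).mpr fun _ => hlam

private lemma key_le {m : ℕ} (A : Matrix (Fin m) (Fin m) ℝ) (hA : A.PosDef)
    (κ v : Fin m → ℝ) :
    2 * (v ⬝ᵥ κ) - v ⬝ᵥ (A *ᵥ v) ≤ κ ⬝ᵥ (A⁻¹ *ᵥ κ) := by
  set w := A⁻¹ *ᵥ κ with hw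
  have hAw : A *ᵥ w = κ := by
    rw [hw, Matrix.mulVec_mulVec, Matrix.mul_nonsing_inv _ hA.det_pos.ne'.isUnit,
      Matrix.one_mulVec]
  have hAt : Aᵀ = A := by
    have := hA.isHermitian
    rwa [Matrix.IsHermitian, Matrix.conjTranspose_eq_transpose_of_trivial] at this
  have h0 : 0 ≤ (v - w) ⬝ᵥ (A *ᵥ (v - w)) := by
    simpa using hA.posSemidef.dotProduct_mulVec_nonneg (v - w)
  have hsymm : w ⬝ᵥ (A *ᵥ v) = v ⬝ᵥ κ := by
    rw [Matrix.dotProduct_mulVec, ← Matrix.mulVec_transpose, hAt, hAw, dotProduct_comm]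
  have hexp : (v - w) ⬝ᵥ (A *ᵥ (v - w))
      = v ⬝ᵥ (A *ᵥ v) - 2 * (v ⬝ᵥ κ) + κ ⬝ᵥ (A⁻¹ *ᵥ κ) := by
    rw [Matrix.mulVec_sub, hAw, sub_dotProduct, dotProduct_sub,
      dotProduct_sub, hsymm, dotProduct_comm w κ]
    ring
  linarith [h0, hexp.le, hexp.ge]

example : True := trivial

private lemma key_eq {m : ℕ} (A : Matrix (Fin m) (Fin m) ℝ) (hA : A.PosDef) (κ : Fin m → ℝ) :
    κ ⬝ᵥ (A⁻¹ *ᵥ κ)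
      = 2 * ((A⁻¹ *ᵥ κ) ⬝ᵥ κ) - (A⁻¹ *ᵥ κ) ⬝ᵥ (A *ᵥ (A⁻¹ *ᵥ κ)) := by
  have hAw : A *ᵥ (A⁻¹ *ᵥ κ) = κ := by
    rw [Matrix.mulVec_mulVec, Matrix.mul_nonsing_inv _ hA.det_pos.ne'.isUnit, Matrix.one_mulVec]
  rw [hAw, dotProduct_comm]
  ring

private lemma sum_restrict {s n : ℕ} (hsn : s ≤ n) (g : Fin n → ℝ)
    (hg : ∀ i : Fin n, s ≤ (i : ℕ) → g i = 0) :
    ∑ i, g i = ∑ j : Fin s, g (Fin.castLE hsn j) := by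
  classical
  have h1 : ∑ j : Fin s, g (Fin.castLE hsn j)
      = ∑ i ∈ Finset.univ.map ⟨Fin.castLE hsn, Fin.castLE_injective hsn⟩, g i :=
    by rw [Finset.sum_map]; rfl
  rw [h1]
  refine (Finset.sum_subset (Finset.subset_univ _) ?_).symm
  intro i _ hi
  apply hg
  by_contra h
  push_neg at h
  exact hi (Finset.mem_map.mpr ⟨⟨i, h⟩, Finset.mem_univ _, rfl⟩)

theorem stmt18 {X : Type*} (K : X → X → ℝ)
    (hK : ∀ (n : ℕ) (z : Fin n → X),
      (Matrix.of fun i j => K (z i) (z j) : Matrix (Fin n) (Fin n) ℝ).PosSemidef)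
    (lam : ℝ) (hlam : 0 < lam) (s n : ℕ) (hsn : s ≤ n) (x : Fin n → X) (x0 : X) :
    K x0 x0 - (fun i : Fin n => K x0 (x i)) ⬝ᵥ
        ((((Matrix.of fun i j : Fin n => K (x i) (x j)) + lam • 1)⁻¹) *ᵥ
          fun i : Fin n => K x0 (x i))
      ≤ K x0 x0 - (fun i : Fin s => K x0 (x (Fin.castLE hsn i))) ⬝ᵥ
        ((((Matrix.of fun i j : Fin s =>
              K (x (Fin.castLE hsn i)) (x (Fin.castLE hsn j))) + lam • 1)⁻¹) *ᵥ
          fun i : Fin s => K x0 (x (Fin.castLE hsn i))) := by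
  set An : Matrix (Fin n) (Fin n) ℝ :=
    (Matrix.of fun i j : Fin n => K (x i) (x j)) + lam • 1 with hAn_def
  set As : Matrix (Fin s) (Fin s) ℝ :=
    (Matrix.of fun i j : Fin s => K (x (Fin.castLE hsn i)) (x (Fin.castLE hsn j))) + lam • 1
    with hAs_def
  set κn : Fin n → ℝ := fun i => K x0 (x i) with hκn_def
  set κs : Fin s → ℝ := fun i => K x0 (x (Fin.castLE hsn i)) with hκs_def
  have hAn : An.PosDef := Matrix.PosDef.posSemidef_add (hK n x) (smul_one_posDef hlam)
  have hAs : As.PosDef :=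
    Matrix.PosDef.posSemidef_add (hK s (fun i => x (Fin.castLE hsn i))) (smul_one_posDef hlam)
  refine sub_le_sub_left ?_ _
  set ws : Fin s → ℝ := As⁻¹ *ᵥ κs with hws_def
  set w : Fin n → ℝ := fun i => if h : (i : ℕ) < s then ws ⟨i, h⟩ else 0 with hw_def
  have hwz : ∀ i : Fin n, s ≤ (i : ℕ) → w i = 0 := by
    intro i hi
    simp [hw_def, Nat.not_lt.mpr hi]
  have hwc : ∀ j : Fin s, w (Fin.castLE hsn j) = ws j := by
    intro j
    simp [hw_def]
  -- entries agree
  have hentry : ∀ i j : Fin s, An (Fin.castLE hsn i) (Fin.castLE hsn j) = As i j := by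
    intro i j
    simp [hAn_def, hAs_def, Matrix.add_apply, Matrix.smul_apply, Matrix.one_apply,
      Fin.castLE_inj]
  -- (a)
  have ha : w ⬝ᵥ κn = ws ⬝ᵥ κs := by
    rw [dotProduct]
    rw [sum_restrict hsn _ (fun i hi => by rw [hwz i hi, zero_mul])]
    exact Finset.sum_congr rfl fun j _ => by rw [hwc j]
  -- mulVec restriction
  have hmv : ∀ j : Fin s, (An *ᵥ w) (Fin.castLE hsn j) = (As *ᵥ ws) j := by
    intro j
    show ∑ i, An (Fin.castLE hsn j) i * w i = ∑ i, As j i * ws i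
    rw [sum_restrict hsn _ (fun i hi => by rw [hwz i hi, mul_zero])]
    exact Finset.sum_congr rfl fun i _ => by rw [hentry j i, hwc i]
  -- (b)
  have hb : w ⬝ᵥ (An *ᵥ w) = ws ⬝ᵥ (As *ᵥ ws) := by
    rw [dotProduct]
    rw [sum_restrict hsn _ (fun i hi => by rw [hwz i hi, zero_mul])]
    exact Finset.sum_congr rfl fun j _ => by rw [hwc j, hmv j]
  calc κs ⬝ᵥ (As⁻¹ *ᵥ κs)
      = 2 * (ws ⬝ᵥ κs) - ws ⬝ᵥ (As *ᵥ ws) := key_eq As hAs κs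
    _ = 2 * (w ⬝ᵥ κn) - w ⬝ᵥ (An *ᵥ w) := by rw [ha, hb]
    _ ≤ κn ⬝ᵥ (An⁻¹ *ᵥ κn) := key_le An hAn κn w
end
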